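/- Under the hypotheses of the threshold recursion τ(i, m) ≥ τ(i, m+1) + τ(i+1, m+1) for nonnegative τ, for every d ≥ 0 there exists h ≤ d with τ(h, d) ≤ 2^{−d} · τ(0, 0). -/

import Mathlib

/-- The `k = 0` case: some threshold among `τ(0,d), …, τ(d,d)` is at most `2^{−d}·τ(0,0)`. -/
theorem small_threshold_exists (τ : ℕ → ℕ → ℝ) (hnn : ∀ i m, 0 ≤ τ i m)
    (hrec : ∀ i m, τ i (m + 1) + τ (i + 1) (m + 1) ≤ τ i m) :
    ∀ d : ℕ, ∃ h ≤ d, τ h d ≤ (2 : ℝ) ^ (-(d : ℤ)) * τ 0 0 := by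
  have key : ∀ d : ℕ, ∃ h ≤ d, (2 : ℝ) ^ d * τ h d ≤ τ 0 0 := by
    intro d
    induction d with
    | zero => exact ⟨0, le_refl 0, by simp⟩
    | succ d ih =>
      obtain ⟨h, hh, hτ⟩ := ih
      have hr := hrec h d
      by_cases hc : τ h (d + 1) ≤ τ (h + 1) (d + 1)
      · refine ⟨h, le_trans hh (Nat.le_succ d), ?_⟩
        have h2 : 2 * τ h (d + 1) ≤ τ h d := by linarith
        calc (2 : ℝ) ^ (d + 1) * τ h (d + 1)
            = (2 : ℝ) ^ d * (2 * τ h (d + 1)) := by ring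
          _ ≤ (2 : ℝ) ^ d * τ h d := by
              exact mul_le_mul_of_nonneg_left h2 (by positivity)
          _ ≤ τ 0 0 := hτ
      · refine ⟨h + 1, Nat.succ_le_succ hh, ?_⟩
        push_neg at hc
        have h2 : 2 * τ (h + 1) (d + 1) ≤ τ h d := by linarith
        calc (2 : ℝ) ^ (d + 1) * τ (h + 1) (d + 1)
            = (2 : ℝ) ^ d * (2 * τ (h + 1) (d + 1)) := by ring
          _ ≤ (2 : ℝ) ^ d * τ h d := by
              exact mul_le_mul_of_nonneg_left h2 (by positivity)
          _ ≤ τ 0 0 := hτ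
  intro d
  obtain ⟨h, hh, hτ⟩ := key d
  refine ⟨h, hh, ?_⟩
  have hpos : (0 : ℝ) < 2 ^ d := by positivity
  rw [zpow_neg, zpow_natCast, inv_mul_eq_div, le_div_iff₀ hpos]
  linarith [hτ]
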